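/- Define u : [0,T]×ℝⁿ → ℝⁿ by u(t,x) := Y^{t,x}(t). Then there exist constants α, β > 0, independent of the arguments, such that |u(t,x) − u(t',x')|² ≤ α|x−x'|² + β(1+|x|²)|t−t'| for all t,t' ∈ [0,T] and x,x' ∈ ℝⁿ. In particular u is Lipschitz continuous in x uniformly in t, and uniformly continuous in t on bounded sets of x. (Regularity of the limit function u, claim 3 of Theorem 2 of the paper.) -/

import Mathlib

open MeasureTheory Set intervalIntegral RealInnerProductSpace

noncomputable section

/-- `ℝⁿ` as a real inner product space. -/
abbrev Vec (n : ℕ) := EuclideanSpace ℝ (Fin n)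

/-- A solution of the (deterministic) forward–backward system with data `(t, x)`:
a pair of maps `X, Y`, continuous on `[t, T]`, satisfying
`X s = x + ∫_t^s f r (X r) (Y r) dr` and `Y s = h (X T) + ∫_s^T g r (X r) (Y r) dr`
for all `s ∈ [t, T]`. -/
def IsFBSol {n : ℕ} (T : ℝ)
    (f g : ℝ → Vec n → Vec n → Vec n) (h : Vec n → Vec n)
    (t : ℝ) (x : Vec n) (X Y : ℝ → Vec n) : Prop :=
  ContinuousOn X (Icc t T) ∧ ContinuousOn Y (Icc t T) ∧
  (∀ s ∈ Icc t T, X s = x + ∫ r in t..s, f r (X r) (Y r)) ∧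
  (∀ s ∈ Icc t T, Y s = h (X T) + ∫ r in s..T, g r (X r) (Y r))


lemma cont_II {t T u s : ℝ} {P : ℝ → ℝ} (hP : ContinuousOn P (Icc t T))
    (hu : u ∈ Icc t T) (hs : s ∈ Icc t T) (hus : u ≤ s) :
    IntervalIntegrable P volume u s := by
  apply ContinuousOn.intervalIntegrable
  rw [uIcc_of_le hus]
  exact hP.mono (Icc_subset_Icc hu.1 hs.2)

lemma cont_IIv {n : ℕ} {t T u s : ℝ} {P : ℝ → Vec n} (hP : ContinuousOn P (Icc t T))
    (hu : u ∈ Icc t T) (hs : s ∈ Icc t T) (hus : u ≤ s) :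
    IntervalIntegrable P volume u s := by
  apply ContinuousOn.intervalIntegrable
  rw [uIcc_of_le hus]
  exact hP.mono (Icc_subset_Icc hu.1 hs.2)

/-- AM-GM integral bound: `∫ (‖P‖+‖Q‖) ≤ ε(T-t) + (∫ (‖P‖²+‖Q‖²))/(2ε)`. -/
lemma S_le {n : ℕ} {t T : ℝ} (htT : t ≤ T) {ε : ℝ} (hε : 0 < ε)
    {P Q : ℝ → Vec n} (hP : ContinuousOn P (Icc t T)) (hQ : ContinuousOn Q (Icc t T)) :
    (∫ r in t..T, (‖P r‖ + ‖Q r‖)) ≤ ε*(T-t) + (∫ r in t..T, (‖P r‖^2 + ‖Q r‖^2))/(2*ε) := by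
  have h1 : ContinuousOn (fun r => ‖P r‖ + ‖Q r‖) (Icc t T) := (hP.norm).add (hQ.norm)
  have h2 : ContinuousOn (fun r => ‖P r‖^2 + ‖Q r‖^2) (Icc t T) :=
    ((hP.norm).pow 2).add ((hQ.norm).pow 2)
  have h3 : ContinuousOn (fun r => ε + (‖P r‖^2 + ‖Q r‖^2)/(2*ε)) (Icc t T) :=
    continuousOn_const.add (h2.div_const _)
  have hmono : (∫ r in t..T, (‖P r‖ + ‖Q r‖)) ≤
      ∫ r in t..T, (ε + (‖P r‖^2 + ‖Q r‖^2)/(2*ε)) := by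
    apply intervalIntegral.integral_mono_on htT
      (cont_II h1 (left_mem_Icc.2 htT) (right_mem_Icc.2 htT) htT)
      (cont_II h3 (left_mem_Icc.2 htT) (right_mem_Icc.2 htT) htT)
    intro r _
    have hp : 0 ≤ ‖P r‖ := norm_nonneg _
    have hq : 0 ≤ ‖Q r‖ := norm_nonneg _
    rw [← sub_le_iff_le_add', le_div_iff₀ (by positivity)]
    nlinarith [sq_nonneg (‖P r‖ - ε), sq_nonneg (‖Q r‖ - ε)]
  calc (∫ r in t..T, (‖P r‖ + ‖Q r‖)) ≤ _ := hmono
    _ = ε*(T-t) + (∫ r in t..T, (‖P r‖^2 + ‖Q r‖^2))/(2*ε) := by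
      rw [intervalIntegral.integral_add (intervalIntegrable_const)
        ((cont_II h2 (left_mem_Icc.2 htT) (right_mem_Icc.2 htT) htT).div_const _),
        intervalIntegral.integral_div, intervalIntegral.integral_const, smul_eq_mul]
      ring

/-- Arithmetic for the Lipschitz estimate. -/
lemma arith_lip (C₁ C₂ T : ℝ) (hC₁ : 0 < C₁) (hC₂ : 0 < C₂) (hT : 0 < T) :
    ∃ L : ℝ, 0 < L ∧ ∀ d v a I S τ : ℝ, 0 < d → 0 ≤ v → 0 ≤ a → 0 ≤ I → 0 ≤ S →
      0 ≤ τ → τ ≤ T →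
      C₂*a^2 + C₂*I ≤ d*v →
      v ≤ C₁*a + C₁*S →
      (∀ ε > 0, S ≤ ε*τ + I/(2*ε)) →
      v ≤ L*d := by
  refine ⟨(2*C₁^2 + 4*C₁^2*T)/C₂, by positivity, ?_⟩
  intro d v a I S τ hd hv ha hI hS hτ hτT h1 h2 h3
  set ε : ℝ := 2*C₁*d/C₂ with hεdef
  have hεpos : 0 < ε := by positivity
  have h3' := h3 ε hεpos
  -- multiplied form: 4*C₁*d*C₂*S ≤ 8*C₁^2*d^2*τ + C₂^2*I
  have hB : 4*C₁*d*C₂*S ≤ 8*C₁^2*d^2*τ + C₂^2*I := by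
    have h4 : (4*C₁*d*C₂) * S ≤ (4*C₁*d*C₂) * (ε*τ + I/(2*ε)) :=
      mul_le_mul_of_nonneg_left h3' (by positivity)
    have he : (4*C₁*d*C₂) * (ε*τ + I/(2*ε)) = 8*C₁^2*d^2*τ + C₂^2*I := by
      rw [hεdef]
      field_simp
      ring
    linarith [he ▸ h4]
  -- key polynomial bound
  have hP : 3*(C₂*(d*v)) ≤ (4 + 8*T)*(C₁^2*d^2) := by
    nlinarith [mul_le_mul_of_nonneg_left h2 (by positivity : (0:ℝ) ≤ 4*C₁*C₂*d),
      mul_nonneg hC₁.le (sq_nonneg (C₂*a - 2*C₁*d)),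
      mul_le_mul_of_nonneg_left h1 hC₂.le,
      mul_nonneg (mul_nonneg (by positivity : (0:ℝ) ≤ 8*C₁^2) (sq_nonneg d)) (sub_nonneg.2 hτT)]
  rw [div_mul_eq_mul_div, le_div_iff₀ hC₂]
  have := le_of_mul_le_mul_right
    (by nlinarith [hP] : (v*C₂)*d ≤ ((2*C₁^2 + 4*C₁^2*T)*d)*d) hd
  linarith

set_option maxHeartbeats 1000000 in
/-- Arithmetic for the a priori bound. -/
lemma arith_apriori (C₁ C₂ M H T : ℝ) (hC₁ : 0 < C₁) (hC₂ : 0 < C₂) (hM : 0 ≤ M)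
    (hH : 0 ≤ H) (hT : 0 < T) :
    ∃ K : ℝ, 0 < K ∧ ∀ N τ a I S w : ℝ, 1 ≤ N → 0 ≤ τ → τ ≤ T → 0 ≤ a → 0 ≤ I →
      0 ≤ S → 0 ≤ w →
      C₂*a^2 + C₂*I ≤ (N-1)*w + H*a + M*S →
      w ≤ H + C₁*a + M*τ + C₁*S →
      (∀ ε > 0, S ≤ ε*τ + I/(2*ε)) →
      a ≤ K*N ∧ S ≤ K*N := by
  obtain ⟨A, hAdef⟩ : ∃ A:ℝ, A = C₂*H + C₂*M*T + (C₁+H)^2/2 + 2*(C₁+M)^2*T := ⟨_, rfl⟩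
  have hA : 0 < A := by rw [hAdef]; positivity
  refine ⟨(1+2*A)/C₂ + (8*(C₁+M)^2*T + 2*A)/(4*(C₁+M)*C₂), by positivity, ?_⟩
  intro N τ a I S w hN hτ hτT ha hI hS hw h1 h2 h3
  have hN0 : (0:ℝ) < N := by linarith
  obtain ⟨ε, hεdef⟩ : ∃ e:ℝ, e = 2*(C₁+M)*N/C₂ := ⟨_, rfl⟩
  have hεpos : 0 < ε := by rw [hεdef]; positivity
  have h3' := h3 ε hεpos
  have hB : 4*(C₁+M)*N*C₂*S ≤ 8*(C₁+M)^2*N^2*τ + C₂^2*I := by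
    have h4 : (4*(C₁+M)*N*C₂) * S ≤ (4*(C₁+M)*N*C₂) * (ε*τ + I/(2*ε)) :=
      mul_le_mul_of_nonneg_left h3' (by positivity)
    have he : (4*(C₁+M)*N*C₂) * (ε*τ + I/(2*ε)) = 8*(C₁+M)^2*N^2*τ + C₂^2*I := by
      rw [hεdef]; field_simp; ring
    linarith [he ▸ h4]
  -- step1 : C₂a²+C₂I ≤ H*N + M*T*N + (C₁+H)*N*a + (C₁+M)*N*S
  have step1 : C₂*a^2 + C₂*I ≤ H*N + M*T*N + (C₁+H)*N*a + (C₁+M)*N*S := by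
    nlinarith [mul_le_mul_of_nonneg_left h2 hN0.le,
      mul_nonneg hw (by linarith : (0:ℝ) ≤ 1),
      mul_nonneg (mul_nonneg hH ha) (by linarith : (0:ℝ) ≤ N - 1),
      mul_nonneg (mul_nonneg hM hS) (by linarith : (0:ℝ) ≤ N - 1),
      mul_nonneg (mul_nonneg hM hN0.le) (by linarith : (0:ℝ) ≤ T - τ)]
  -- key quadratic bound: C₂²a² ≤ 2AN², C₂²I ≤ 2AN²
  have s1 : C₂^2*a^2 + C₂^2*I ≤ C₂*H*N + C₂*M*T*N + (C₁+H)*N*(C₂*a) + (C₁+M)*N*(C₂*S) := by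
    nlinarith [mul_le_mul_of_nonneg_left step1 hC₂.le]
  have f1 : (C₁+H)*N*(C₂*a) ≤ ((C₁+H)*N)^2/2 + (C₂*a)^2/2 := by
    nlinarith [sq_nonneg ((C₁+H)*N - C₂*a)]
  have f2 : (C₁+M)*N*(C₂*S) ≤ 2*(C₁+M)^2*N^2*T + C₂^2*I/4 := by
    nlinarith [hB, mul_nonneg (mul_nonneg (by positivity : (0:ℝ) ≤ 2*(C₁+M)^2)
      (sq_nonneg N)) (sub_nonneg.2 hτT)]
  have f3 : (0:ℝ) ≤ N^2 - N := by nlinarith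
  have e1 : C₂*H*N ≤ C₂*H*N^2 := by nlinarith [mul_nonneg (mul_nonneg hC₂.le hH) f3]
  have e2 : C₂*M*T*N ≤ C₂*M*T*N^2 := by
    nlinarith [mul_nonneg (mul_nonneg (mul_nonneg hC₂.le hM) hT.le) f3]
  have key : C₂^2*a^2/2 + 3*(C₂^2*I)/4 ≤ A*N^2 := by
    rw [hAdef]; nlinarith [s1, f1, f2, e1, e2]
  have hQa : C₂^2*a^2 ≤ 2*A*N^2 := by
    linarith [key, mul_nonneg (sq_nonneg C₂) hI]
  have hQI : C₂^2*I ≤ 2*A*N^2 := by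
    linarith [key, mul_nonneg (sq_nonneg C₂) (sq_nonneg a)]
  constructor
  · -- a ≤ ((1+2A)/C₂)N ≤ K N
    have haN : a ≤ ((1+2*A)/C₂)*N := by
      rw [div_mul_eq_mul_div, le_div_iff₀ hC₂]
      rcases le_or_gt (C₂*a) N with hcase | hcase
      · linarith [hcase, mul_nonneg hA.le hN0.le]
      · have h5 : (C₂*a)*(C₂*a) ≤ (2*A*N)*N := by linarith [hQa]
        have h6 : (C₂*a)*N ≤ (C₂*a)*(C₂*a) :=
          mul_le_mul_of_nonneg_left hcase.le (by positivity)
        have h7 := le_of_mul_le_mul_right (h6.trans h5) hN0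
        linarith [h7]
    have : 0 ≤ ((8*(C₁+M)^2*T + 2*A)/(4*(C₁+M)*C₂))*N := by positivity
    linarith
  · have hSN : S ≤ ((8*(C₁+M)^2*T + 2*A)/(4*(C₁+M)*C₂))*N := by
      rw [div_mul_eq_mul_div, le_div_iff₀ (by positivity)]
      have h5 : (S*(4*(C₁+M)*C₂))*N ≤ ((8*(C₁+M)^2*T + 2*A)*N)*N := by
        linarith [hB, hQI, mul_nonneg (mul_nonneg (by positivity : (0:ℝ) ≤ 8*(C₁+M)^2) (sq_nonneg N)) (sub_nonneg.2 hτT)]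
      exact le_of_mul_le_mul_right h5 hN0
    have : 0 ≤ ((1+2*A)/C₂)*N := by positivity
    linarith

lemma inner_ftc {n : ℕ} {t T : ℝ} (htT : t ≤ T) {X Y F G : ℝ → Vec n}
    (hF : ContinuousOn F (Icc t T)) (hG : ContinuousOn G (Icc t T))
    (hX : ContinuousOn X (Icc t T)) (hY : ContinuousOn Y (Icc t T))
    (hXeq : ∀ s ∈ Icc t T, X s = X t + ∫ r in t..s, F r)
    (hYeq : ∀ s ∈ Icc t T, Y s = Y T + ∫ r in s..T, G r) :
    ⟪X T, Y T⟫ - ⟪X t, Y t⟫ = ∫ r in t..T, (⟪F r, Y r⟫ - ⟪X r, G r⟫) := by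
  have huI : uIcc t T = Icc t T := uIcc_of_le htT
  have hFi : IntervalIntegrable F volume t T := (huI.symm ▸ hF : ContinuousOn F (uIcc t T)).intervalIntegrable
  have hGi : IntervalIntegrable G volume t T := (huI.symm ▸ hG : ContinuousOn G (uIcc t T)).intervalIntegrable
  have key : ∀ s ∈ Ioo t T, HasDerivAt (fun u => ⟪X u, Y u⟫)
      (⟪F s, Y s⟫ - ⟪X s, G s⟫) s := by
    intro s hs
    have hmem : Icc t T ∈ nhds s := Icc_mem_nhds hs.1 hs.2
    have hXd : HasDerivAt X (F s) s := by
      have h1 : HasDerivAt (fun u => X t + ∫ r in t..u, F r) (F s) s := by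
        refine HasDerivAt.const_add _ (intervalIntegral.integral_hasDerivAt_right
          (hFi.mono_set ?_) ⟨Icc t T, hmem, hF.aestronglyMeasurable measurableSet_Icc⟩
          (hF.continuousAt hmem))
        rw [huI, uIcc_of_le hs.1.le]
        exact Icc_subset_Icc le_rfl hs.2.le
      exact h1.congr_of_eventuallyEq (by filter_upwards [hmem] with u hu using hXeq u hu)
    have hYd : HasDerivAt Y (-(G s)) s := by
      have h1 : HasDerivAt (fun u => Y T + ((∫ r in t..T, G r) - ∫ r in t..u, G r))
          (-(G s)) s := by
        have h2 : HasDerivAt (fun u => ∫ r in t..u, G r) (G s) s :=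
          intervalIntegral.integral_hasDerivAt_right
            (hGi.mono_set (by rw [huI, uIcc_of_le hs.1.le]; exact Icc_subset_Icc le_rfl hs.2.le))
            ⟨Icc t T, hmem, hG.aestronglyMeasurable measurableSet_Icc⟩ (hG.continuousAt hmem)
        simpa using ((hasDerivAt_const s (∫ r in t..T, G r)).sub h2).const_add (Y T)
      refine h1.congr_of_eventuallyEq ?_
      filter_upwards [hmem] with u hu
      have hsplit : (∫ r in t..u, G r) + (∫ r in u..T, G r) = ∫ r in t..T, G r :=
        integral_add_adjacent_intervals
          (hGi.mono_set (by rw [huI, uIcc_of_le hu.1]; exact Icc_subset_Icc le_rfl hu.2))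
          (hGi.mono_set (by rw [huI, uIcc_of_le hu.2]; exact Icc_subset_Icc hu.1 le_rfl))
      rw [hYeq u hu]
      rw [← hsplit]
      abel
    have := hXd.inner ℝ hYd
    simp only [real_inner_smul_left, inner_neg_right] at this
    exact this.congr_deriv (by ring)
  have hcont : ContinuousOn (fun u => ⟪X u, Y u⟫) (Icc t T) := hX.inner hY
  have hint : IntervalIntegrable (fun r => ⟪F r, Y r⟫ - ⟪X r, G r⟫) volume t T :=
    (huI.symm ▸ ((hF.inner hY).sub (hX.inner hG)) : ContinuousOn _ (uIcc t T)).intervalIntegrable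
  exact (intervalIntegral.integral_eq_sub_of_hasDeriv_right_of_le htT hcont
    (fun s hs => (key s hs).hasDerivWithinAt) hint).symm

/-- Regularity of the limit function `u(t,x) := Y^{t,x}(t)` (claim 3 of Theorem 2 of the paper):
there are constants `α, β > 0` with
`‖u(t,x) − u(t',x')‖² ≤ α‖x−x'‖² + β(1+‖x‖²)|t−t'|` for all `t, t' ∈ [0,T]`, `x, x' ∈ ℝⁿ`;
in particular `u` is Lipschitz in `x` uniformly in `t` and uniformly continuous in `t`
on bounded sets of `x`. -/
theorem fbsde_value_function_regularity
    (n : ℕ) (hn : 1 ≤ n) (T : ℝ) (hT : 0 < T)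
    (f g : ℝ → Vec n → Vec n → Vec n) (h : Vec n → Vec n)
    (hf_cont : ContinuousOn (fun p : ℝ × Vec n × Vec n => f p.1 p.2.1 p.2.2)
      (Icc 0 T ×ˢ (univ ×ˢ univ)))
    (hg_cont : ContinuousOn (fun p : ℝ × Vec n × Vec n => g p.1 p.2.1 p.2.2)
      (Icc 0 T ×ˢ (univ ×ˢ univ)))
    (hh_cont : Continuous h)
    (C₁ : ℝ) (hC₁ : 0 < C₁)
    (hf_lip : ∀ t ∈ Icc (0:ℝ) T, ∀ x₁ x₂ y₁ y₂ : Vec n,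
      ‖f t x₁ y₁ - f t x₂ y₂‖ ≤ C₁ * (‖x₁ - x₂‖ + ‖y₁ - y₂‖))
    (hg_lip : ∀ t ∈ Icc (0:ℝ) T, ∀ x₁ x₂ y₁ y₂ : Vec n,
      ‖g t x₁ y₁ - g t x₂ y₂‖ ≤ C₁ * (‖x₁ - x₂‖ + ‖y₁ - y₂‖))
    (hh_lip : ∀ x₁ x₂ : Vec n, ‖h x₁ - h x₂‖ ≤ C₁ * ‖x₁ - x₂‖)
    (C₂ : ℝ) (hC₂ : 0 < C₂)
    (hmono : ∀ t ∈ Icc (0:ℝ) T, ∀ x₁ x₂ y₁ y₂ : Vec n,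
      ⟪-(g t x₁ y₁ - g t x₂ y₂), x₁ - x₂⟫ + ⟪f t x₁ y₁ - f t x₂ y₂, y₁ - y₂⟫
        ≤ -C₂ * (‖x₁ - x₂‖ ^ 2 + ‖y₁ - y₂‖ ^ 2))
    (hh_mono : ∀ x₁ x₂ : Vec n, C₂ * ‖x₁ - x₂‖ ^ 2 ≤ ⟪h x₁ - h x₂, x₁ - x₂⟫)
    (X Y : ℝ → Vec n → ℝ → Vec n)
    (hsol : ∀ t ∈ Icc (0:ℝ) T, ∀ x : Vec n, IsFBSol T f g h t x (X t x) (Y t x))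
    (huniq : ∀ t ∈ Icc (0:ℝ) T, ∀ x : Vec n, ∀ X' Y' : ℝ → Vec n,
      IsFBSol T f g h t x X' Y' → EqOn X' (X t x) (Icc t T) ∧ EqOn Y' (Y t x) (Icc t T))
    : ∃ α : ℝ, 0 < α ∧ ∃ β : ℝ, 0 < β ∧
      ∀ t ∈ Icc (0:ℝ) T, ∀ t' ∈ Icc (0:ℝ) T, ∀ x x' : Vec n,
        ‖Y t x t - Y t' x' t'‖ ^ 2 ≤ α * ‖x - x'‖ ^ 2 + β * (1 + ‖x‖ ^ 2) * |t - t'| := by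
  have htIcc : ∀ {t : ℝ}, t ∈ Icc (0:ℝ) T → Icc t T ⊆ Icc (0:ℝ) T :=
    fun ht => Icc_subset_Icc ht.1 le_rfl
  -- composed continuity
  have hFc : ∀ (F : ℝ → Vec n → Vec n → Vec n),
      ContinuousOn (fun p : ℝ × Vec n × Vec n => F p.1 p.2.1 p.2.2) (Icc 0 T ×ˢ (univ ×ˢ univ)) →
      ∀ t ∈ Icc (0:ℝ) T, ∀ P Q : ℝ → Vec n, ContinuousOn P (Icc t T) →
      ContinuousOn Q (Icc t T) → ContinuousOn (fun r => F r (P r) (Q r)) (Icc t T) := by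
    intro F hFcont t ht P Q hP hQ
    exact hFcont.comp (continuousOn_id.prodMk (hP.prodMk hQ))
      (fun r hr => ⟨Icc_subset_Icc ht.1 le_rfl hr, trivial, trivial⟩)
  -- bound for f, g at (0,0)
  obtain ⟨Mf, hMf⟩ := (isCompact_Icc : IsCompact (Icc (0:ℝ) T)).exists_bound_of_continuousOn
    (hFc f hf_cont 0 ⟨le_rfl, hT.le⟩ (fun _ => 0) (fun _ => 0)
      continuousOn_const continuousOn_const)
  obtain ⟨Mg, hMg⟩ := (isCompact_Icc : IsCompact (Icc (0:ℝ) T)).exists_bound_of_continuousOn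
    (hFc g hg_cont 0 ⟨le_rfl, hT.le⟩ (fun _ => 0) (fun _ => 0)
      continuousOn_const continuousOn_const)
  obtain ⟨M, hMdef⟩ : ∃ M : ℝ, M = |Mf| + |Mg| := ⟨_, rfl⟩
  have hM0 : 0 ≤ M := by rw [hMdef]; positivity
  have hMf' : ∀ r ∈ Icc (0:ℝ) T, ‖f r 0 0‖ ≤ M := fun r hr =>
    (hMf r hr).trans (by rw [hMdef]; have := le_abs_self Mf; have := abs_nonneg Mg; linarith)
  have hMg' : ∀ r ∈ Icc (0:ℝ) T, ‖g r 0 0‖ ≤ M := fun r hr =>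
    (hMg r hr).trans (by rw [hMdef]; have := le_abs_self Mg; have := abs_nonneg Mf; linarith)
  -- pointwise linear growth bounds
  have hfb : ∀ t ∈ Icc (0:ℝ) T, ∀ x y : Vec n, ‖f t x y‖ ≤ M + C₁*(‖x‖ + ‖y‖) := by
    intro t ht x y
    have h1 := hf_lip t ht x 0 y 0
    simp only [sub_zero] at h1
    have h2 := hMf' t ht
    have h3 := norm_le_insert' (f t x y) (f t 0 0)
    linarith
  have hgb : ∀ t ∈ Icc (0:ℝ) T, ∀ x y : Vec n, ‖g t x y‖ ≤ M + C₁*(‖x‖ + ‖y‖) := by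
    intro t ht x y
    have h1 := hg_lip t ht x 0 y 0
    simp only [sub_zero] at h1
    have h2 := hMg' t ht
    have h3 := norm_le_insert' (g t x y) (g t 0 0)
    linarith
  -- ### a priori bound
  have apri : ∃ K : ℝ, 0 < K ∧ ∀ t ∈ Icc (0:ℝ) T, ∀ x : Vec n, ∀ s ∈ Icc t T,
      ‖X t x s‖ + ‖Y t x s‖ ≤ K * (1 + ‖x‖) := by
    obtain ⟨K, hK, harith⟩ := arith_apriori C₁ C₂ M ‖h 0‖ T hC₁ hC₂ hM0 (norm_nonneg _) hT
    have hKpos : 0 < 1 + ‖h 0‖ + 2*M*T + 3*C₁*K := by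
      nlinarith [norm_nonneg (h 0), mul_nonneg hM0 hT.le, mul_pos hC₁ hK]
    refine ⟨1 + ‖h 0‖ + 2*M*T + 3*C₁*K, hKpos, ?_⟩
    intro t ht x s hs
    obtain ⟨hXc, hYc, hXeq, hYeq⟩ := hsol t ht x
    have htm : t ∈ Icc t T := ⟨le_rfl, ht.2⟩
    have hTm : T ∈ Icc t T := ⟨ht.2, le_rfl⟩
    have hfc : ContinuousOn (fun r => f r (X t x r) (Y t x r)) (Icc t T) :=
      hFc f hf_cont t ht _ _ hXc hYc
    have hgc : ContinuousOn (fun r => g r (X t x r) (Y t x r)) (Icc t T) :=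
      hFc g hg_cont t ht _ _ hXc hYc
    have hXt : X t x t = x := by
      rw [hXeq t htm, intervalIntegral.integral_same, add_zero]
    have hYT : Y t x T = h (X t x T) := by
      rw [hYeq T hTm, intervalIntegral.integral_same, add_zero]
    set I : ℝ := ∫ r in t..T, (‖X t x r‖^2 + ‖Y t x r‖^2) with hIdef
    set S : ℝ := ∫ r in t..T, (‖X t x r‖ + ‖Y t x r‖) with hSdef
    have hIc : ContinuousOn (fun r => ‖X t x r‖^2 + ‖Y t x r‖^2) (Icc t T) :=
      ((hXc.norm.pow 2).add (hYc.norm.pow 2))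
    have hSc : ContinuousOn (fun r => ‖X t x r‖ + ‖Y t x r‖) (Icc t T) :=
      (hXc.norm.add hYc.norm)
    have hI0 : 0 ≤ I := intervalIntegral.integral_nonneg ht.2 (fun u _ => by positivity)
    have hS0 : 0 ≤ S := intervalIntegral.integral_nonneg ht.2 (fun u _ => by positivity)
    -- the basic identity
    have hid := inner_ftc ht.2 hfc hgc hXc hYc
      (fun s hs => by rw [hXeq s hs, hXt]) (fun s hs => by rw [hYeq s hs, hYT])
    -- pointwise monotonicity bound
    have hptw : ∀ r ∈ Icc t T,
        (⟪f r (X t x r) (Y t x r), Y t x r⟫ - ⟪X t x r, g r (X t x r) (Y t x r)⟫)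
          ≤ M*(‖X t x r‖ + ‖Y t x r‖) - C₂*(‖X t x r‖^2 + ‖Y t x r‖^2) := by
      intro r hr
      have hm := hmono r (htIcc ht hr) (X t x r) 0 (Y t x r) 0
      simp only [sub_zero] at hm
      rw [inner_neg_left, inner_sub_left, inner_sub_left] at hm
      have e1 : ⟪X t x r, g r (X t x r) (Y t x r)⟫
          = ⟪g r (X t x r) (Y t x r), X t x r⟫ := real_inner_comm _ _
      have b1 : |⟪g r 0 0, X t x r⟫| ≤ M*‖X t x r‖ :=
        (abs_real_inner_le_norm _ _).trans
          (mul_le_mul_of_nonneg_right (hMg' r (htIcc ht hr)) (norm_nonneg _))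
      have b2 : |⟪f r 0 0, Y t x r⟫| ≤ M*‖Y t x r‖ :=
        (abs_real_inner_le_norm _ _).trans
          (mul_le_mul_of_nonneg_right (hMf' r (htIcc ht hr)) (norm_nonneg _))
      have l1 := (abs_le.1 b1).1
      have l2 := (abs_le.1 b2).2
      rw [e1]
      linarith only [hm, l1, l2]
    -- integrate it
    have hIm : (∫ r in t..T, (⟪f r (X t x r) (Y t x r), Y t x r⟫
        - ⟪X t x r, g r (X t x r) (Y t x r)⟫)) ≤ M*S - C₂*I := by
      have m := intervalIntegral.integral_mono_on ht.2
        (cont_II ((hfc.inner hYc).sub (hXc.inner hgc)) htm hTm ht.2)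
        (cont_II ((continuousOn_const.mul hSc).sub (continuousOn_const.mul hIc)) htm hTm ht.2) hptw
      calc (∫ r in t..T, (⟪f r (X t x r) (Y t x r), Y t x r⟫
            - ⟪X t x r, g r (X t x r) (Y t x r)⟫))
          ≤ ∫ r in t..T, (M*(‖X t x r‖ + ‖Y t x r‖) - C₂*(‖X t x r‖^2 + ‖Y t x r‖^2)) := m
        _ = M*S - C₂*I := by
            rw [intervalIntegral.integral_sub
              ((cont_II hSc htm hTm ht.2).const_mul M)
              ((cont_II hIc htm hTm ht.2).const_mul C₂),
              intervalIntegral.integral_const_mul, intervalIntegral.integral_const_mul]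
    -- endpoint bounds
    have hinT : C₂*‖X t x T‖^2 ≤ ⟪X t x T, Y t x T⟫ + ‖h 0‖*‖X t x T‖ := by
      have h5 := hh_mono (X t x T) 0
      simp only [sub_zero] at h5
      rw [inner_sub_left] at h5
      have h6 := (abs_le.1 ((abs_real_inner_le_norm (h 0) (X t x T)))).1
      have h7 : ⟪h (X t x T), X t x T⟫ = ⟪X t x T, Y t x T⟫ := by
        rw [hYT]; exact real_inner_comm _ _
      linarith only [h5, h6, h7]
    have hint : ⟪X t x t, Y t x t⟫ ≤ ‖x‖ * ‖Y t x t‖ := by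
      rw [hXt]; exact real_inner_le_norm _ _
    -- hypothesis (2) : w-bound
    have hhXT : ‖h (X t x T)‖ ≤ ‖h 0‖ + C₁*‖X t x T‖ := by
      have h1 := hh_lip (X t x T) 0
      simp only [sub_zero] at h1
      have h3 := norm_le_insert' (h (X t x T)) (h 0)
      linarith only [h1, h3]
    have hMS : (∫ r in t..T, (M + C₁*(‖X t x r‖ + ‖Y t x r‖))) = M*(T-t) + C₁*S := by
      rw [intervalIntegral.integral_add intervalIntegrable_const
        ((cont_II hSc htm hTm ht.2).const_mul C₁),
        intervalIntegral.integral_const_mul, intervalIntegral.integral_const, smul_eq_mul]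
      ring
    have hgint : (∫ r in t..T, ‖g r (X t x r) (Y t x r)‖) ≤ M*(T-t) + C₁*S := by
      rw [← hMS]
      apply intervalIntegral.integral_mono_on ht.2
        (cont_II hgc.norm htm hTm ht.2)
        (cont_II (continuousOn_const.add (continuousOn_const.mul hSc)) htm hTm ht.2)
      intro r hr
      exact hgb r (htIcc ht hr) _ _
    have hw2 : ‖Y t x t‖ ≤ ‖h 0‖ + C₁*‖X t x T‖ + M*(T-t) + C₁*S := by
      have e := hYeq t htm
      have hn : ‖Y t x t‖ ≤ ‖h (X t x T)‖ + ‖∫ r in t..T, g r (X t x r) (Y t x r)‖ := by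
        rw [e]; exact norm_add_le _ _
      have hn2 := intervalIntegral.norm_integral_le_integral_norm
        (f := fun r => g r (X t x r) (Y t x r)) (μ := volume) ht.2
      linarith only [hn, hn2, hgint, hhXT]
    -- hypothesis (1)
    have h1final : C₂*‖X t x T‖^2 + C₂*I
        ≤ (1 + ‖x‖ - 1)*‖Y t x t‖ + ‖h 0‖*‖X t x T‖ + M*S := by
      linarith only [hid, hIm, hinT, hint]
    -- hypothesis (3)
    have h3final : ∀ ε > 0, S ≤ ε*(T-t) + I/(2*ε) := fun ε hε => S_le ht.2 hε hXc hYc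
    obtain ⟨haK, hSK⟩ := harith (1+‖x‖) (T-t) ‖X t x T‖ I S ‖Y t x t‖
      (by linarith [norm_nonneg x]) (by linarith [ht.2]) (by linarith [ht.1])
      (norm_nonneg _) hI0 hS0 (norm_nonneg _) h1final hw2 h3final
    -- pointwise sup bounds
    have hXs : ‖X t x s‖ ≤ ‖x‖ + (M*(T-t) + C₁*S) := by
      have hfint : (∫ r in t..s, ‖f r (X t x r) (Y t x r)‖) ≤ M*(T-t) + C₁*S := by
        have m1 : (∫ r in t..s, ‖f r (X t x r) (Y t x r)‖)
            ≤ ∫ r in t..s, (M + C₁*(‖X t x r‖ + ‖Y t x r‖)) := by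
          apply intervalIntegral.integral_mono_on hs.1
            (cont_II hfc.norm htm hs hs.1)
            (cont_II (continuousOn_const.add (continuousOn_const.mul hSc)) htm hs hs.1)
          intro r hr
          exact hfb r (htIcc ht ⟨hr.1, hr.2.trans hs.2⟩) _ _
        have m2 : (∫ r in t..s, (M + C₁*(‖X t x r‖ + ‖Y t x r‖)))
            ≤ ∫ r in t..T, (M + C₁*(‖X t x r‖ + ‖Y t x r‖)) := by
          have hadd : (∫ r in t..s, (M + C₁*(‖X t x r‖ + ‖Y t x r‖)))
              + (∫ r in s..T, (M + C₁*(‖X t x r‖ + ‖Y t x r‖)))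
              = ∫ r in t..T, (M + C₁*(‖X t x r‖ + ‖Y t x r‖)) := integral_add_adjacent_intervals
            (cont_II (continuousOn_const.add (continuousOn_const.mul hSc)) htm hs hs.1)
            (cont_II (continuousOn_const.add (continuousOn_const.mul hSc)) hs hTm hs.2)
          have hpos : (0:ℝ) ≤ ∫ r in s..T, (M + C₁*(‖X t x r‖ + ‖Y t x r‖)) := by
            apply intervalIntegral.integral_nonneg hs.2
            intro u _
            exact add_nonneg hM0 (by positivity)
          linarith only [hadd, hpos]
        linarith only [m1, m2, hMS]
      have hn : ‖X t x s‖ ≤ ‖x‖ + ‖∫ r in t..s, f r (X t x r) (Y t x r)‖ := by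
        rw [hXeq s hs]; exact norm_add_le _ _
      have hn2 := intervalIntegral.norm_integral_le_integral_norm
        (f := fun r => f r (X t x r) (Y t x r)) (μ := volume) hs.1
      linarith only [hn, hn2, hfint]
    have hYs : ‖Y t x s‖ ≤ (‖h 0‖ + C₁*‖X t x T‖) + (M*(T-t) + C₁*S) := by
      have hgint2 : (∫ r in s..T, ‖g r (X t x r) (Y t x r)‖) ≤ M*(T-t) + C₁*S := by
        have m1 : (∫ r in s..T, ‖g r (X t x r) (Y t x r)‖)
            ≤ ∫ r in s..T, (M + C₁*(‖X t x r‖ + ‖Y t x r‖)) := by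
          apply intervalIntegral.integral_mono_on hs.2
            (cont_II hgc.norm hs hTm hs.2)
            (cont_II (continuousOn_const.add (continuousOn_const.mul hSc)) hs hTm hs.2)
          intro r hr
          exact hgb r (htIcc ht ⟨hs.1.trans hr.1, hr.2⟩) _ _
        have m2 : (∫ r in s..T, (M + C₁*(‖X t x r‖ + ‖Y t x r‖)))
            ≤ ∫ r in t..T, (M + C₁*(‖X t x r‖ + ‖Y t x r‖)) := by
          have hadd : (∫ r in t..s, (M + C₁*(‖X t x r‖ + ‖Y t x r‖)))
              + (∫ r in s..T, (M + C₁*(‖X t x r‖ + ‖Y t x r‖)))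
              = ∫ r in t..T, (M + C₁*(‖X t x r‖ + ‖Y t x r‖)) := integral_add_adjacent_intervals
            (cont_II (continuousOn_const.add (continuousOn_const.mul hSc)) htm hs hs.1)
            (cont_II (continuousOn_const.add (continuousOn_const.mul hSc)) hs hTm hs.2)
          have hpos : (0:ℝ) ≤ ∫ r in t..s, (M + C₁*(‖X t x r‖ + ‖Y t x r‖)) := by
            apply intervalIntegral.integral_nonneg hs.1
            intro u _
            exact add_nonneg hM0 (by positivity)
          linarith only [hadd, hpos]
        linarith only [m1, m2, hMS]
      have hn : ‖Y t x s‖ ≤ ‖h (X t x T)‖ + ‖∫ r in s..T, g r (X t x r) (Y t x r)‖ := by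
        rw [hYeq s hs]; exact norm_add_le _ _
      have hn2 := intervalIntegral.norm_integral_le_integral_norm
        (f := fun r => g r (X t x r) (Y t x r)) (μ := volume) hs.2
      linarith only [hn, hn2, hgint2, hhXT]
    -- combine
    have hMτ : M*(T-t) ≤ M*T := mul_le_mul_of_nonneg_left (by linarith [ht.1]) hM0
    have hC₁S : C₁*S ≤ C₁*(K*(1+‖x‖)) := mul_le_mul_of_nonneg_left hSK hC₁.le
    have hC₁a : C₁*‖X t x T‖ ≤ C₁*(K*(1+‖x‖)) := mul_le_mul_of_nonneg_left haK hC₁.le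
    have hx0 := norm_nonneg x
    have p1 : 0 ≤ ‖h 0‖*‖x‖ := mul_nonneg (norm_nonneg _) hx0
    have p2 : 0 ≤ M*T*‖x‖ := mul_nonneg (mul_nonneg hM0 hT.le) hx0
    linarith only [hXs, hYs, hMτ, hC₁S, hC₁a, p1, p2, norm_nonneg x]
  obtain ⟨K, hK, hsup⟩ := apri
  -- ### Lipschitz bound in x
  have lip : ∃ L : ℝ, 0 < L ∧ ∀ t ∈ Icc (0:ℝ) T, ∀ x x' : Vec n,
      ‖Y t x t - Y t x' t‖ ≤ L * ‖x - x'‖ := by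
    obtain ⟨L, hL, harith⟩ := arith_lip C₁ C₂ T hC₁ hC₂ hT
    refine ⟨L, hL, ?_⟩
    intro t ht x x'
    rcases eq_or_ne x x' with rfl | hne
    · simp
    have hd : 0 < ‖x - x'‖ := norm_sub_pos_iff.2 hne
    obtain ⟨hX1c, hY1c, hX1eq, hY1eq⟩ := hsol t ht x
    obtain ⟨hX2c, hY2c, hX2eq, hY2eq⟩ := hsol t ht x'
    have htm : t ∈ Icc t T := ⟨le_rfl, ht.2⟩
    have hTm : T ∈ Icc t T := ⟨ht.2, le_rfl⟩
    have hf1c : ContinuousOn (fun r => f r (X t x r) (Y t x r)) (Icc t T) :=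
      hFc f hf_cont t ht _ _ hX1c hY1c
    have hf2c : ContinuousOn (fun r => f r (X t x' r) (Y t x' r)) (Icc t T) :=
      hFc f hf_cont t ht _ _ hX2c hY2c
    have hg1c : ContinuousOn (fun r => g r (X t x r) (Y t x r)) (Icc t T) :=
      hFc g hg_cont t ht _ _ hX1c hY1c
    have hg2c : ContinuousOn (fun r => g r (X t x' r) (Y t x' r)) (Icc t T) :=
      hFc g hg_cont t ht _ _ hX2c hY2c
    have hX1t : X t x t = x := by
      rw [hX1eq t htm, intervalIntegral.integral_same, add_zero]
    have hX2t : X t x' t = x' := by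
      rw [hX2eq t htm, intervalIntegral.integral_same, add_zero]
    have hY1T : Y t x T = h (X t x T) := by
      rw [hY1eq T hTm, intervalIntegral.integral_same, add_zero]
    have hY2T : Y t x' T = h (X t x' T) := by
      rw [hY2eq T hTm, intervalIntegral.integral_same, add_zero]
    have hPc : ContinuousOn (fun r => X t x r - X t x' r) (Icc t T) := hX1c.sub hX2c
    have hQc : ContinuousOn (fun r => Y t x r - Y t x' r) (Icc t T) := hY1c.sub hY2c
    have hFdc : ContinuousOn (fun r => f r (X t x r) (Y t x r)
        - f r (X t x' r) (Y t x' r)) (Icc t T) := hf1c.sub hf2c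
    have hGdc : ContinuousOn (fun r => g r (X t x r) (Y t x r)
        - g r (X t x' r) (Y t x' r)) (Icc t T) := hg1c.sub hg2c
    have hPeq : ∀ s ∈ Icc t T, X t x s - X t x' s = (X t x t - X t x' t)
        + ∫ r in t..s, (f r (X t x r) (Y t x r) - f r (X t x' r) (Y t x' r)) := by
      intro s hs
      rw [intervalIntegral.integral_sub (cont_IIv hf1c htm hs hs.1)
        (cont_IIv hf2c htm hs hs.1), hX1eq s hs, hX2eq s hs, hX1t, hX2t]
      abel
    have hQeq : ∀ s ∈ Icc t T, Y t x s - Y t x' s = (Y t x T - Y t x' T)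
        + ∫ r in s..T, (g r (X t x r) (Y t x r) - g r (X t x' r) (Y t x' r)) := by
      intro s hs
      rw [intervalIntegral.integral_sub (cont_IIv hg1c hs hTm hs.2)
        (cont_IIv hg2c hs hTm hs.2), hY1eq s hs, hY2eq s hs, hY1T, hY2T]
      abel
    have hid := inner_ftc ht.2 hFdc hGdc hPc hQc hPeq hQeq
    set I : ℝ := ∫ r in t..T, (‖X t x r - X t x' r‖^2 + ‖Y t x r - Y t x' r‖^2) with hIdef
    set S : ℝ := ∫ r in t..T, (‖X t x r - X t x' r‖ + ‖Y t x r - Y t x' r‖) with hSdef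
    have hIc : ContinuousOn (fun r => ‖X t x r - X t x' r‖^2 + ‖Y t x r - Y t x' r‖^2)
        (Icc t T) := ((hPc.norm.pow 2).add (hQc.norm.pow 2))
    have hSc : ContinuousOn (fun r => ‖X t x r - X t x' r‖ + ‖Y t x r - Y t x' r‖)
        (Icc t T) := (hPc.norm.add hQc.norm)
    have hI0 : 0 ≤ I := intervalIntegral.integral_nonneg ht.2 (fun u _ => by positivity)
    have hS0 : 0 ≤ S := intervalIntegral.integral_nonneg ht.2 (fun u _ => by positivity)
    have hptw : ∀ r ∈ Icc t T,
        (⟪f r (X t x r) (Y t x r) - f r (X t x' r) (Y t x' r), Y t x r - Y t x' r⟫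
          - ⟪X t x r - X t x' r, g r (X t x r) (Y t x r) - g r (X t x' r) (Y t x' r)⟫)
        ≤ -C₂*(‖X t x r - X t x' r‖^2 + ‖Y t x r - Y t x' r‖^2) := by
      intro r hr
      have hm := hmono r (htIcc ht hr) (X t x r) (X t x' r) (Y t x r) (Y t x' r)
      rw [inner_neg_left] at hm
      have e1 : ⟪X t x r - X t x' r,
          g r (X t x r) (Y t x r) - g r (X t x' r) (Y t x' r)⟫
        = ⟪g r (X t x r) (Y t x r) - g r (X t x' r) (Y t x' r),
          X t x r - X t x' r⟫ := real_inner_comm _ _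
      linarith only [hm, e1]
    have hIm : (∫ r in t..T,
        (⟪f r (X t x r) (Y t x r) - f r (X t x' r) (Y t x' r), Y t x r - Y t x' r⟫
          - ⟪X t x r - X t x' r, g r (X t x r) (Y t x r) - g r (X t x' r) (Y t x' r)⟫))
        ≤ -(C₂*I) := by
      have m : (∫ r in t..T,
          (⟪f r (X t x r) (Y t x r) - f r (X t x' r) (Y t x' r), Y t x r - Y t x' r⟫
            - ⟪X t x r - X t x' r, g r (X t x r) (Y t x r) - g r (X t x' r) (Y t x' r)⟫))
          ≤ ∫ r in t..T, (-C₂)*(‖X t x r - X t x' r‖^2 + ‖Y t x r - Y t x' r‖^2) :=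
        intervalIntegral.integral_mono_on ht.2
        (cont_II ((hFdc.inner hQc).sub (hPc.inner hGdc)) htm hTm ht.2)
        (cont_II (continuousOn_const.mul hIc) htm hTm ht.2)
        (fun r hr => by have := hptw r hr; linarith only [this])
      calc _ ≤ ∫ r in t..T, (-C₂)*(‖X t x r - X t x' r‖^2 + ‖Y t x r - Y t x' r‖^2) := m
        _ = -(C₂*I) := by rw [intervalIntegral.integral_const_mul]; ring
    have hin1 : C₂*‖X t x T - X t x' T‖^2 ≤ ⟪X t x T - X t x' T, Y t x T - Y t x' T⟫ := by
      have h5 := hh_mono (X t x T) (X t x' T)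
      have e : ⟪X t x T - X t x' T, Y t x T - Y t x' T⟫
          = ⟪h (X t x T) - h (X t x' T), X t x T - X t x' T⟫ := by
        rw [hY1T, hY2T]; exact real_inner_comm _ _
      linarith [e ▸ h5]
    have hin2 : ⟪X t x t - X t x' t, Y t x t - Y t x' t⟫
        ≤ ‖x - x'‖ * ‖Y t x t - Y t x' t‖ := by
      rw [hX1t, hX2t]; exact real_inner_le_norm _ _
    have h1final : C₂*‖X t x T - X t x' T‖^2 + C₂*I ≤ ‖x - x'‖ * ‖Y t x t - Y t x' t‖ := by
      linarith only [hid, hIm, hin1, hin2]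
    have h2final : ‖Y t x t - Y t x' t‖
        ≤ C₁*‖X t x T - X t x' T‖ + C₁*S := by
      have e := hQeq t htm
      have hn : ‖Y t x t - Y t x' t‖ ≤ ‖Y t x T - Y t x' T‖
          + ‖∫ r in t..T, (g r (X t x r) (Y t x r) - g r (X t x' r) (Y t x' r))‖ := by
        rw [e]; exact norm_add_le _ _
      have hn2 := intervalIntegral.norm_integral_le_integral_norm
        (f := fun r => g r (X t x r) (Y t x r) - g r (X t x' r) (Y t x' r))
        (μ := volume) ht.2
      have hn3 : (∫ r in t..T, ‖g r (X t x r) (Y t x r) - g r (X t x' r) (Y t x' r)‖)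
          ≤ C₁*S := by
        have m := intervalIntegral.integral_mono_on ht.2
          (cont_II hGdc.norm htm hTm ht.2)
          (cont_II (continuousOn_const.mul hSc) htm hTm ht.2)
          (fun r hr => hg_lip r (htIcc ht hr) _ _ _ _)
        calc _ ≤ ∫ r in t..T, C₁*(‖X t x r - X t x' r‖ + ‖Y t x r - Y t x' r‖) := m
          _ = C₁*S := intervalIntegral.integral_const_mul _ _
      have hQT : ‖Y t x T - Y t x' T‖ ≤ C₁*‖X t x T - X t x' T‖ := by
        rw [hY1T, hY2T]; exact hh_lip _ _
      linarith only [hn, hn2, hn3, hQT]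
    have h3final : ∀ ε > 0, S ≤ ε*(T-t) + I/(2*ε) := fun ε hε => S_le ht.2 hε hPc hQc
    exact harith ‖x - x'‖ ‖Y t x t - Y t x' t‖ ‖X t x T - X t x' T‖ I S (T-t)
      hd (norm_nonneg _) (norm_nonneg _) hI0 hS0 (by linarith [ht.2]) (by linarith [ht.1])
      h1final h2final h3final
  obtain ⟨L, hL, hlip⟩ := lip
  -- ### flow property
  have flow : ∀ t ∈ Icc (0:ℝ) T, ∀ t' ∈ Icc (0:ℝ) T, t ≤ t' → ∀ x : Vec n,
      Y t x t' = Y t' (X t x t') t' := by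
    intro t ht t' ht' htt' x
    obtain ⟨hXc, hYc, hXeq, hYeq⟩ := hsol t ht x
    have hsub' : Icc t' T ⊆ Icc t T := Icc_subset_Icc htt' le_rfl
    have htm : t ∈ Icc t T := ⟨le_rfl, ht.2⟩
    have ht'm : t' ∈ Icc t T := ⟨htt', ht'.2⟩
    have hfc : ContinuousOn (fun r => f r (X t x r) (Y t x r)) (Icc t T) :=
      hFc f hf_cont t ht _ _ hXc hYc
    have hsol' : IsFBSol T f g h t' (X t x t') (X t x) (Y t x) := by
      refine ⟨hXc.mono hsub', hYc.mono hsub', ?_, ?_⟩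
      · intro s hs
        have hsm : s ∈ Icc t T := hsub' hs
        have hsplit : (∫ r in t..t', f r (X t x r) (Y t x r))
            + (∫ r in t'..s, f r (X t x r) (Y t x r))
            = ∫ r in t..s, f r (X t x r) (Y t x r) :=
          integral_add_adjacent_intervals (cont_IIv hfc htm ht'm htt')
            (cont_IIv hfc ht'm hsm hs.1)
        rw [hXeq s hsm, hXeq t' ht'm, ← hsplit]
        abel
      · intro s hs
        exact hYeq s (hsub' hs)
    exact (huniq t' ht' (X t x t') _ _ hsol').2 ⟨le_rfl, ht'.2⟩
  -- ### time regularity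
  have tim : ∀ t ∈ Icc (0:ℝ) T, ∀ t' ∈ Icc (0:ℝ) T, t ≤ t' → ∀ x : Vec n,
      ‖Y t x t - Y t' x t'‖ ≤ (1+L)*(M + C₁*(K*(1+‖x‖)))*(t'-t) := by
    intro t ht t' ht' htt' x
    obtain ⟨hXc, hYc, hXeq, hYeq⟩ := hsol t ht x
    have htm : t ∈ Icc t T := ⟨le_rfl, ht.2⟩
    have ht'm : t' ∈ Icc t T := ⟨htt', ht'.2⟩
    have hTm : T ∈ Icc t T := ⟨ht.2, le_rfl⟩
    have hfc : ContinuousOn (fun r => f r (X t x r) (Y t x r)) (Icc t T) :=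
      hFc f hf_cont t ht _ _ hXc hYc
    have hgc : ContinuousOn (fun r => g r (X t x r) (Y t x r)) (Icc t T) :=
      hFc g hg_cont t ht _ _ hXc hYc
    have hXt : X t x t = x := by
      rw [hXeq t htm, intervalIntegral.integral_same, add_zero]
    have hcb : 0 ≤ M + C₁*(K*(1+‖x‖)) := by
      have : 0 ≤ C₁*(K*(1+‖x‖)) := by positivity
      linarith
    have hgbd : ∀ r ∈ Icc t T, ‖g r (X t x r) (Y t x r)‖ ≤ M + C₁*(K*(1+‖x‖)) := by
      intro r hr
      have h1 := hgb r (htIcc ht hr) (X t x r) (Y t x r)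
      have h2 := hsup t ht x r hr
      have h3 := mul_le_mul_of_nonneg_left h2 hC₁.le
      linarith only [h1, h3]
    have hfbd : ∀ r ∈ Icc t T, ‖f r (X t x r) (Y t x r)‖ ≤ M + C₁*(K*(1+‖x‖)) := by
      intro r hr
      have h1 := hfb r (htIcc ht hr) (X t x r) (Y t x r)
      have h2 := hsup t ht x r hr
      have h3 := mul_le_mul_of_nonneg_left h2 hC₁.le
      linarith only [h1, h3]
    -- increment of Y
    have hYd : ‖Y t x t - Y t x t'‖ ≤ (M + C₁*(K*(1+‖x‖)))*(t'-t) := by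
      have hsplit : (∫ r in t..t', g r (X t x r) (Y t x r))
          + (∫ r in t'..T, g r (X t x r) (Y t x r))
          = ∫ r in t..T, g r (X t x r) (Y t x r) :=
        integral_add_adjacent_intervals (cont_IIv hgc htm ht'm htt')
          (cont_IIv hgc ht'm hTm ht'.2)
      have e : Y t x t - Y t x t' = ∫ r in t..t', g r (X t x r) (Y t x r) := by
        rw [hYeq t htm, hYeq t' ht'm, ← hsplit]
        abel
      rw [e]
      have hn := intervalIntegral.norm_integral_le_integral_norm
        (f := fun r => g r (X t x r) (Y t x r)) (μ := volume) htt'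
      have hm : (∫ r in t..t', ‖g r (X t x r) (Y t x r)‖)
          ≤ ∫ r in t..t', (M + C₁*(K*(1+‖x‖))) := by
        apply intervalIntegral.integral_mono_on htt'
          (cont_II hgc.norm htm ht'm htt') intervalIntegrable_const
        intro r hr
        exact hgbd r ⟨hr.1, hr.2.trans ht'.2⟩
      rw [intervalIntegral.integral_const, smul_eq_mul] at hm
      linarith only [hn, hm]
    -- increment of X
    have hXd : ‖X t x t' - x‖ ≤ (M + C₁*(K*(1+‖x‖)))*(t'-t) := by
      have e : X t x t' - x = ∫ r in t..t', f r (X t x r) (Y t x r) := by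
        rw [hXeq t' ht'm]; abel
      rw [e]
      have hn := intervalIntegral.norm_integral_le_integral_norm
        (f := fun r => f r (X t x r) (Y t x r)) (μ := volume) htt'
      have hm : (∫ r in t..t', ‖f r (X t x r) (Y t x r)‖)
          ≤ ∫ r in t..t', (M + C₁*(K*(1+‖x‖))) := by
        apply intervalIntegral.integral_mono_on htt'
          (cont_II hfc.norm htm ht'm htt') intervalIntegrable_const
        intro r hr
        exact hfbd r ⟨hr.1, hr.2.trans ht'.2⟩
      rw [intervalIntegral.integral_const, smul_eq_mul] at hm
      linarith only [hn, hm]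
    -- flow + Lipschitz
    have hflow := flow t ht t' ht' htt' x
    have hlip' := hlip t' ht' (X t x t') x
    have tri : ‖Y t x t - Y t' x t'‖ ≤ ‖Y t x t - Y t x t'‖
        + ‖Y t' (X t x t') t' - Y t' x t'‖ := by
      have := dist_triangle (Y t x t) (Y t x t') (Y t' x t')
      rw [hflow] at this
      simpa [dist_eq_norm, hflow] using this
    have hLX : L * ‖X t x t' - x‖ ≤ L * ((M + C₁*(K*(1+‖x‖)))*(t'-t)) :=
      mul_le_mul_of_nonneg_left hXd hL.le
    linarith only [tri, hYd, hlip', hLX]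
  -- ### final assembly
  refine ⟨2*L^2, by positivity, 4*(1+L)^2*(M+C₁*K)^2*T + 1, ?_, ?_⟩
  · have h1 : (0:ℝ) ≤ 4*(1+L)^2*(M+C₁*K)^2 := by positivity
    nlinarith [mul_nonneg h1 hT.le]
  intro t ht t' ht' x x'
  have key1 : ‖Y t x t - Y t' x t'‖ ≤ (1+L)*(M + C₁*(K*(1+‖x‖)))*|t - t'| := by
    rcases le_total t t' with hle | hle
    · rw [abs_sub_comm, abs_of_nonneg (by linarith)]
      exact tim t ht t' ht' hle x
    · rw [abs_of_nonneg (by linarith), norm_sub_rev]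
      exact tim t' ht' t ht hle x
  have key2 := hlip t' ht' x x'
  have tri : ‖Y t x t - Y t' x' t'‖ ≤ ‖Y t x t - Y t' x t'‖
      + ‖Y t' x t' - Y t' x' t'‖ := by
    have := dist_triangle (Y t x t) (Y t' x t') (Y t' x' t')
    simpa [dist_eq_norm] using this
  have hcc : M + C₁*(K*(1+‖x‖)) ≤ (M+C₁*K)*(1+‖x‖) := by
    have := mul_nonneg hM0 (norm_nonneg x)
    nlinarith
  have hcpos : 0 ≤ M + C₁*(K*(1+‖x‖)) := by
    have : 0 ≤ C₁*(K*(1+‖x‖)) := by positivity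
    linarith
  have hs0 : 0 ≤ |t - t'| := abs_nonneg _
  have htt : |t - t'| ≤ T := by
    rw [abs_le]
    constructor <;> linarith [ht.1, ht.2, ht'.1, ht'.2]
  have h0 : ‖Y t x t - Y t' x' t'‖ ≤ (1+L)*((M+C₁*K)*(1+‖x‖))*|t - t'| + L*‖x - x'‖ := by
    have hm := mul_le_mul_of_nonneg_right
      (mul_le_mul_of_nonneg_left hcc (by linarith : (0:ℝ) ≤ 1+L)) hs0
    linarith only [tri, key1, key2, hm]
  have h1 : ‖Y t x t - Y t' x' t'‖^2
      ≤ ((1+L)*((M+C₁*K)*(1+‖x‖))*|t - t'| + L*‖x - x'‖)^2 :=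
    pow_le_pow_left₀ (norm_nonneg _) h0 2
  have h2 : ((1+L)*((M+C₁*K)*(1+‖x‖))*|t - t'| + L*‖x - x'‖)^2
      ≤ 2*((1+L)*((M+C₁*K)*(1+‖x‖))*|t - t'|)^2 + 2*(L*‖x - x'‖)^2 := by
    linarith only [sq_nonneg ((1+L)*((M+C₁*K)*(1+‖x‖))*|t - t'| - L*‖x - x'‖)]
  have h4 : (1+‖x‖)^2 ≤ 2*(1+‖x‖^2) := by linarith only [sq_nonneg (1-‖x‖)]
  have h5 : |t - t'|^2 ≤ T*|t - t'| := by
    have hh := mul_le_mul_of_nonneg_right htt hs0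
    linarith only [hh]
  have h6 : ((1+L)*((M+C₁*K)*(1+‖x‖))*|t - t'|)^2
      ≤ (1+L)^2*(M+C₁*K)^2*(2*(1+‖x‖^2))*(T*|t - t'|) := by
    have e : ((1+L)*((M+C₁*K)*(1+‖x‖))*|t - t'|)^2
        = ((1+L)^2*(M+C₁*K)^2)*((1+‖x‖)^2*|t - t'|^2) := by ring
    rw [e]
    have hq : (1+‖x‖)^2*|t - t'|^2 ≤ (2*(1+‖x‖^2))*(T*|t - t'|) :=
      mul_le_mul h4 h5 (sq_nonneg _) (by positivity)
    have := mul_le_mul_of_nonneg_left hq (by positivity : (0:ℝ) ≤ (1+L)^2*(M+C₁*K)^2)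
    linarith [this]
  have hrest : 0 ≤ (1+‖x‖^2)*|t - t'| := by positivity
  linarith only [h1, h2, h6, hrest]
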